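/- arXiv:2605.07663 — 3 statements merged into one kernel-verified Lean document; each statement's English description precedes it below -/
import Mathlib

section
/- There is no attribution mechanism that is simultaneously exactly Shapley-fair on every reported game and false-name-proof on the class of finite monotone {0,1}-valued cooperative games. Precisely: let p be any mechanism that, for every finite monotone cooperative game v with values in {0,1} and every player j of v, pays p_j(v) = Sh_j(v). Then p is not false-name-proof: for the two-player unanimity game u_{{A,B}}, player A receives p_A = 1/2, while in the three-player unanimity game u_{{A₁,A₂,B}} obtained when A replaces itself by the two pseudonyms A₁, A₂, the pseudonyms jointly receive p_{A₁} + p_{A₂} = 1/3 + 1/3 = 2/3 > 1/2, so the latent provider A strictly increases its total payment by the false-name split. -/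
open Finset

/-- The Shapley value of player `i` in the cooperative game `v` on the full
finite player set of type `ι`. -/
noncomputable def shapley {ι : Type*} [Fintype ι] [DecidableEq ι]
    (v : Finset ι → ℝ) (i : ι) : ℝ :=
  ∑ T ∈ ((Finset.univ : Finset ι).erase i).powerset,
    ((Nat.factorial T.card * Nat.factorial (Fintype.card ι - 1 - T.card) : ℝ) /
      Nat.factorial (Fintype.card ι)) * (v (insert i T) - v T)

/-- The unanimity game on the player set `N`. -/
noncomputable def unanimity {ι : Type*} [DecidableEq ι]
    (N : Finset ι) (T : Finset ι) : ℝ :=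
  if N ⊆ T then 1 else 0

lemma unanimity_empty {ι : Type*} [DecidableEq ι] (N : Finset ι) (h : N.Nonempty) :
    unanimity N ∅ = 0 := by
  rw [unanimity, if_neg]
  intro hs
  exact absurd (Finset.subset_empty.mp hs) (Finset.nonempty_iff_ne_empty.mp h)

lemma unanimity_mono {ι : Type*} [DecidableEq ι] (N : Finset ι)
    (T T' : Finset ι) (h : T ⊆ T') : unanimity N T ≤ unanimity N T' := by
  unfold unanimity
  by_cases hT : N ⊆ T
  · rw [if_pos hT, if_pos (hT.trans h)]
  · rw [if_neg hT]
    split <;> norm_num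

lemma unanimity_zero_one {ι : Type*} [DecidableEq ι] (N T : Finset ι) :
    unanimity N T = 0 ∨ unanimity N T = 1 := by
  unfold unanimity; split
  · right; rfl
  · left; rfl

lemma shapley2 : shapley (unanimity (Finset.univ : Finset (Fin 2))) 0 = 1/2 := by
  rw [shapley, show ((univ : Finset (Fin 2)).erase 0).powerset = {∅, {1}} from by decide,
    Finset.sum_insert (by decide), Finset.sum_singleton]
  rw [unanimity, unanimity, unanimity, unanimity]
  norm_num [show ¬ (univ : Finset (Fin 2)) ⊆ insert 0 ∅ from by decide,
    show (univ : Finset (Fin 2)) ⊆ insert 0 {1} from by decide,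
    show ¬ (univ : Finset (Fin 2)) ⊆ {1} from by decide,
    Nat.factorial, show (univ:Finset (Fin 2)) ≠ ∅ from by decide,
    show (univ:Finset (Fin 2)) ≠ {0} from by decide]

lemma shapley3_0 : shapley (unanimity (Finset.univ : Finset (Fin 3))) 0 = 1/3 := by
  rw [shapley, show ((univ : Finset (Fin 3)).erase 0).powerset = {∅, {1}, {2}, {1,2}} from by decide]
  rw [Finset.sum_insert (by decide), Finset.sum_insert (by decide),
    Finset.sum_insert (by decide), Finset.sum_singleton]
  simp only [unanimity]
  norm_num [show ¬ (univ : Finset (Fin 3)) ⊆ insert 0 ∅ from by decide,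
    show ¬ (univ : Finset (Fin 3)) ⊆ insert 0 {1} from by decide,
    show ¬ (univ : Finset (Fin 3)) ⊆ insert 0 {2} from by decide,
    show (univ : Finset (Fin 3)) ⊆ insert 0 {1,2} from by decide,
    show ¬ (univ : Finset (Fin 3)) ⊆ {1} from by decide,
    show ¬ (univ : Finset (Fin 3)) ⊆ {2} from by decide,
    show ¬ (univ : Finset (Fin 3)) ⊆ ({1,2} : Finset (Fin 3)) from by decide,
    Nat.factorial, show (univ:Finset (Fin 3)) ≠ ∅ from by decide,
    show (univ:Finset (Fin 3)) ≠ {0} from by decide,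
    show ({1,2} : Finset (Fin 3)).card = 2 from by decide]

lemma shapley3_1 : shapley (unanimity (Finset.univ : Finset (Fin 3))) 1 = 1/3 := by
  rw [shapley, show ((univ : Finset (Fin 3)).erase 1).powerset = {∅, {0}, {2}, {0,2}} from by decide]
  rw [Finset.sum_insert (by decide), Finset.sum_insert (by decide),
    Finset.sum_insert (by decide), Finset.sum_singleton]
  simp only [unanimity]
  norm_num [show ¬ (univ : Finset (Fin 3)) ⊆ insert 1 ∅ from by decide,
    show ¬ (univ : Finset (Fin 3)) ⊆ insert 1 {0} from by decide,
    show ¬ (univ : Finset (Fin 3)) ⊆ insert 1 {2} from by decide,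
    show (univ : Finset (Fin 3)) ⊆ insert 1 {0,2} from by decide,
    show ¬ (univ : Finset (Fin 3)) ⊆ {0} from by decide,
    show ¬ (univ : Finset (Fin 3)) ⊆ {2} from by decide,
    show ¬ (univ : Finset (Fin 3)) ⊆ ({0,2} : Finset (Fin 3)) from by decide,
    Nat.factorial, show (univ:Finset (Fin 3)) ≠ ∅ from by decide,
    show (univ:Finset (Fin 3)) ≠ {1} from by decide,
    show ({0,2} : Finset (Fin 3)).card = 2 from by decide]

/-- Exact reported-game Shapley fairness on finite monotone {0,1}-valued games is
incompatible with false-name-proofness: with such a mechanism, in the two-player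
unanimity game player `A` receives `1/2`, while after splitting into pseudonyms
`A₁, A₂` (yielding the three-player unanimity game) the pseudonyms jointly receive
`2/3 > 1/2`. -/
theorem shapley_fair_not_false_name_proof
    (p : ∀ n : ℕ, (Finset (Fin n) → ℝ) → Fin n → ℝ)
    (hfair : ∀ (n : ℕ) (v : Finset (Fin n) → ℝ),
      v ∅ = 0 →
      (∀ T T' : Finset (Fin n), T ⊆ T' → v T ≤ v T') →
      (∀ T : Finset (Fin n), v T = 0 ∨ v T = 1) →
      ∀ j : Fin n, p n v j = shapley v j) :
    p 2 (unanimity (Finset.univ : Finset (Fin 2))) 0 = 1 / 2 ∧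
    p 3 (unanimity (Finset.univ : Finset (Fin 3))) 0 +
      p 3 (unanimity (Finset.univ : Finset (Fin 3))) 1 = 1 / 3 + 1 / 3 ∧
    p 3 (unanimity (Finset.univ : Finset (Fin 3))) 0 +
      p 3 (unanimity (Finset.univ : Finset (Fin 3))) 1 >
      p 2 (unanimity (Finset.univ : Finset (Fin 2))) 0 := by
  have h2 := hfair 2 (unanimity univ) (unanimity_empty _ univ_nonempty)
    (unanimity_mono _) (unanimity_zero_one _)
  have h3 := hfair 3 (unanimity univ) (unanimity_empty _ univ_nonempty)
    (unanimity_mono _) (unanimity_zero_one _)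
  rw [h2 0, h3 0, h3 1, shapley2, shapley3_0, shapley3_1]
  norm_num
end

section
/- Let n ≥ 2 and consider the n-player unanimity game, in which every player's Shapley value is 1/n. If one player splits into k ≥ 2 pseudonyms, the resulting game is the (n + k − 1)-player unanimity game, in which each pseudonym has Shapley value 1/(n + k − 1), so the latent provider's total payment after the split is k/(n + k − 1). The multiplicative split-gain is therefore G_Sh(n,k) = (k/(n + k − 1)) / (1/n) = n·k/(n + k − 1), which is strictly greater than 1 for all n, k ≥ 2, and for each fixed k converges to k as n → ∞. -/
open Finset Filter

lemma shapley_unanimity_univ {ι : Type*} [Fintype ι] [DecidableEq ι] (i : ι) :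
    shapley (unanimity (Finset.univ : Finset ι)) i = 1 / (Fintype.card ι : ℝ) := by
  classical
  have hm : 1 ≤ Fintype.card ι := Fintype.card_pos_iff.mpr ⟨i⟩
  unfold shapley
  rw [Finset.sum_eq_single (Finset.univ.erase i)]
  · have h1 : insert i (Finset.univ.erase i) = (Finset.univ : Finset ι) :=
      Finset.insert_erase (Finset.mem_univ i)
    have h2 : unanimity (Finset.univ : Finset ι) (insert i (Finset.univ.erase i)) = 1 := by
      rw [h1, unanimity, if_pos (Finset.Subset.refl _)]
    have h3 : unanimity (Finset.univ : Finset ι) (Finset.univ.erase i) = 0 := by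
      rw [unanimity, if_neg]
      intro h
      exact (Finset.notMem_erase i Finset.univ) (h (Finset.mem_univ i))
    rw [h2, h3]
    rw [Finset.card_erase_of_mem (Finset.mem_univ i), Finset.card_univ]
    have : Fintype.card ι - 1 - (Fintype.card ι - 1) = 0 := Nat.sub_self _
    rw [this, Nat.factorial_zero]
    have hfac : Nat.factorial (Fintype.card ι)
        = Fintype.card ι * Nat.factorial (Fintype.card ι - 1) :=
      (Nat.mul_factorial_pred (by omega)).symm
    rw [hfac]
    have hpos : (0:ℝ) < Nat.factorial (Fintype.card ι - 1) := by
      exact_mod_cast Nat.factorial_pos _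
    have hcpos : (0:ℝ) < Fintype.card ι := by exact_mod_cast hm
    push_cast
    field_simp
    ring
  · intro T hT hTne
    have hTsub : T ⊆ Finset.univ.erase i := Finset.mem_powerset.mp hT
    have hiT : i ∉ T := fun h => Finset.notMem_erase i Finset.univ (hTsub h)
    have h3 : unanimity (Finset.univ : Finset ι) T = 0 := by
      rw [unanimity, if_neg]
      intro h
      exact hiT (h (Finset.mem_univ i))
    have h4 : unanimity (Finset.univ : Finset ι) (insert i T) = 0 := by
      rw [unanimity, if_neg]
      intro h
      apply hTne
      apply Finset.Subset.antisymm hTsub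
      intro x hx
      have hxne : x ≠ i := Finset.ne_of_mem_erase hx
      have := h (Finset.mem_univ x)
      rcases Finset.mem_insert.mp this with h' | h'
      · exact absurd h' hxne
      · exact h'
    rw [h3, h4]; ring
  · intro h
    exact absurd (Finset.mem_powerset_self _) h

/-- In the `n`-player unanimity game every player's Shapley value is `1/n`;
after one player splits into `k ≥ 2` pseudonyms, the resulting
`(n+k-1)`-player unanimity game gives each pseudonym Shapley value
`1/(n+k-1)`, so the latent provider's total is `k/(n+k-1)`; the multiplicative
split-gain is `n*k/(n+k-1) > 1`, converging to `k` as `n → ∞`. -/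
theorem shapley_unanimity_split_gain (n k : ℕ) (hn : 2 ≤ n) (hk : 2 ≤ k) :
    (∀ i : Fin n,
      shapley (unanimity (Finset.univ : Finset (Fin n))) i = 1 / n) ∧
    (∀ i : Fin (n + k - 1),
      shapley (unanimity (Finset.univ : Finset (Fin (n + k - 1)))) i
        = 1 / ((n : ℝ) + k - 1)) ∧
    (∀ J : Finset (Fin (n + k - 1)), J.card = k →
      ∑ j ∈ J, shapley (unanimity (Finset.univ : Finset (Fin (n + k - 1)))) j
        = k / ((n : ℝ) + k - 1)) ∧
    ((k / ((n : ℝ) + k - 1)) / (1 / n) = n * k / ((n : ℝ) + k - 1)) ∧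
    (1 < (n : ℝ) * k / ((n : ℝ) + k - 1)) ∧
    Tendsto (fun m : ℕ => (m : ℝ) * k / ((m : ℝ) + k - 1)) atTop (nhds k) := by
  have hcast : ((n + k - 1 : ℕ) : ℝ) = (n : ℝ) + k - 1 := by
    have : 1 ≤ n + k := by omega
    push_cast [Nat.cast_sub this]
    ring
  have hn' : (2:ℝ) ≤ n := by exact_mod_cast hn
  have hk' : (2:ℝ) ≤ k := by exact_mod_cast hk
  have hdenpos : (0:ℝ) < (n : ℝ) + k - 1 := by linarith
  have hsh2 : ∀ i : Fin (n + k - 1),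
      shapley (unanimity (Finset.univ : Finset (Fin (n + k - 1)))) i
        = 1 / ((n : ℝ) + k - 1) := by
    intro i
    rw [shapley_unanimity_univ, Fintype.card_fin, hcast]
  refine ⟨?_, hsh2, ?_, ?_, ?_, ?_⟩
  · intro i
    rw [shapley_unanimity_univ, Fintype.card_fin]
  · intro J hJ
    rw [Finset.sum_congr rfl (fun j _ => hsh2 j), Finset.sum_const, hJ]
    field_simp
    rw [nsmul_eq_mul]; field_simp
  · have hn0 : (0:ℝ) < n := by linarith
    field_simp
  · rw [one_lt_div hdenpos]
    nlinarith
  · have hden : Tendsto (fun m : ℕ => (m : ℝ) + k - 1) atTop atTop := by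
      have : Tendsto (fun m : ℕ => (m : ℝ)) atTop atTop := tendsto_natCast_atTop_atTop
      exact tendsto_atTop_add_const_right _ ((k:ℝ) - 1)
        (by simpa [add_sub_assoc] using this) |>.congr (fun m => by ring)
    have h0 : Tendsto (fun m : ℕ => ((k:ℝ) * (k - 1)) / ((m : ℝ) + k - 1)) atTop (nhds 0) :=
      Tendsto.div_atTop tendsto_const_nhds hden
    have heq : (fun m : ℕ => (m : ℝ) * k / ((m : ℝ) + k - 1))
        = fun m : ℕ => (k : ℝ) - ((k:ℝ) * (k - 1)) / ((m : ℝ) + k - 1) := by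
      funext m
      have hmpos : (0:ℝ) < (m : ℝ) + k - 1 := by
        have : (0:ℝ) ≤ m := Nat.cast_nonneg m
        linarith
      field_simp
      ring
    rw [heq]
    simpa using tendsto_const_nhds.sub h0
end

section
/- Approximate false-name-proofness under clustering leakage: let K be a finite set of honest clusters with true semivalues φ : K → ℝ and estimates φ̂ satisfying |φ̂_k − φ_k| ≤ η for every k ∈ K. Suppose a manipulation by provider i produces a manipulated quotient game whose cluster set is K ∪ E, where every honest cluster k ∈ K is matched and E is a finite set of escaped clusters disjoint from K; let φ^α denote the true semivalues of the manipulated game and φ̂^α estimates with |φ̂^α_k − φ^α_k| ≤ η for every k ∈ K ∪ E. Let a_{i,k} ∈ [0,1] be the honest shares, and let the manipulated shares a^α_{j,k} over the pseudonym set J satisfy Σ_{j ∈ J} a^α_{j,k} = a_{i,k} for every matched cluster k ∈ K and Σ_{j ∈ J} a^α_{j,k} ≤ 1 for every escaped cluster k ∈ E. Define the escaped-cluster mass L = Σ_{k ∈ E} |φ^α_k|, the matched-cluster drift D = Σ_{k ∈ K} |φ^α_k − φ_k|, and K_α = |K| + |E|. Then the additive manipulation gain with estimated payments satisfies Σ_{j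 ∈ J} Σ_{k ∈ K ∪ E} a^α_{j,k} · φ̂^α_k − Σ_{k ∈ K} a_{i,k} · φ̂_k ≤ L + D + 2 · K_α · η. -/
open Finset

/-- Approximate false-name-proofness under clustering leakage: with matched
clusters `K` and escaped clusters `E` (disjoint, modelled by the sum type
`K ⊕ E`), per-cluster semivalue estimation error at most `η`, honest shares in
`[0,1]`, false-name-neutral manipulated shares on matched clusters and total
share at most one on escaped clusters, the additive manipulation gain with
estimated payments is at most `L + D + 2 * K_α * η`, where `L` is the
escaped-cluster mass, `D` the matched-cluster drift, and `K_α = |K| + |E|`. -/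
theorem approximate_false_name_proofness
    {K E J : Type*} [Fintype K] [Fintype E] [Fintype J]
    (φ φhat : K → ℝ)              -- true / estimated honest cluster semivalues
    (φα φαhat : K ⊕ E → ℝ)        -- true / estimated manipulated semivalues
    (η : ℝ)
    (hφhat : ∀ k : K, |φhat k - φ k| ≤ η)
    (hφαhat : ∀ c : K ⊕ E, |φαhat c - φα c| ≤ η)
    (a : K → ℝ)                   -- honest shares of provider i
    (ha0 : ∀ k : K, 0 ≤ a k) (ha1 : ∀ k : K, a k ≤ 1)
    (aα : J → K ⊕ E → ℝ)          -- manipulated shares of the pseudonyms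
    (haα0 : ∀ (j : J) (c : K ⊕ E), 0 ≤ aα j c)
    (hmatched : ∀ k : K, ∑ j : J, aα j (Sum.inl k) = a k)
    (hescaped : ∀ e : E, ∑ j : J, aα j (Sum.inr e) ≤ 1) :
    ∑ j : J, ∑ c : K ⊕ E, aα j c * φαhat c - ∑ k : K, a k * φhat k ≤
      (∑ e : E, |φα (Sum.inr e)|) + (∑ k : K, |φα (Sum.inl k) - φ k|) +
        2 * (Fintype.card K + Fintype.card E) * η := by

  have key : ∑ j : J, ∑ c : K ⊕ E, aα j c * φαhat c =
      (∑ k : K, a k * φαhat (Sum.inl k)) +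
        ∑ e : E, (∑ j : J, aα j (Sum.inr e)) * φαhat (Sum.inr e) := by
    rw [Finset.sum_comm, Fintype.sum_sum_type]
    congr 1
    · exact Finset.sum_congr rfl fun k _ => by rw [← Finset.sum_mul, hmatched]
    · exact Finset.sum_congr rfl fun e _ => by rw [← Finset.sum_mul]
  have h1 : ∀ k : K, a k * φαhat (Sum.inl k) - a k * φhat k ≤
      |φα (Sum.inl k) - φ k| + 2 * η := by
    intro k
    have h2 := abs_le.mp (hφhat k)
    have h3 := abs_le.mp (hφαhat (Sum.inl k))
    have h4 := le_abs_self (φα (Sum.inl k) - φ k)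
    have h5 := neg_abs_le (φα (Sum.inl k) - φ k)
    nlinarith [ha0 k, ha1 k, abs_nonneg (φα (Sum.inl k) - φ k)]
  have h2 : ∀ e : E, (∑ j : J, aα j (Sum.inr e)) * φαhat (Sum.inr e) ≤
      |φα (Sum.inr e)| + 2 * η := by
    intro e
    have hs0 : (0:ℝ) ≤ ∑ j : J, aα j (Sum.inr e) :=
      Finset.sum_nonneg fun j _ => haα0 j _
    have h3 := abs_le.mp (hφαhat (Sum.inr e))
    have h4 := le_abs_self (φα (Sum.inr e))
    have h5 := neg_abs_le (φα (Sum.inr e))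
    have hη : 0 ≤ η := le_trans (abs_nonneg _) (hφαhat (Sum.inr e))
    nlinarith [hescaped e, abs_nonneg (φα (Sum.inr e))]
  have hK : ∑ k : K, (|φα (Sum.inl k) - φ k| + 2 * η) =
      (∑ k : K, |φα (Sum.inl k) - φ k|) + Fintype.card K * (2 * η) := by
    rw [Finset.sum_add_distrib, Finset.sum_const, Finset.card_univ, nsmul_eq_mul]
  have hE : ∑ e : E, (|φα (Sum.inr e)| + 2 * η) =
      (∑ e : E, |φα (Sum.inr e)|) + Fintype.card E * (2 * η) := by
    rw [Finset.sum_add_distrib, Finset.sum_const, Finset.card_univ, nsmul_eq_mul]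
  have hsum1 : ∑ k : K, (a k * φαhat (Sum.inl k) - a k * φhat k) ≤
      ∑ k : K, (|φα (Sum.inl k) - φ k| + 2 * η) :=
    Finset.sum_le_sum fun k _ => h1 k
  have hsum2 : ∑ e : E, (∑ j : J, aα j (Sum.inr e)) * φαhat (Sum.inr e) ≤
      ∑ e : E, (|φα (Sum.inr e)| + 2 * η) :=
    Finset.sum_le_sum fun e _ => h2 e
  rw [key, Finset.sum_sub_distrib] at *
  linarith [hsum1, hsum2, hK.le, hE.le, hK.ge, hE.ge]
end
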